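/- Let A be the n×n adjacency matrix of the directed path graph, i.e., A has ones on the superdiagonal and zeros elsewhere. For 1 ≤ r,s ≤ n let E_{rs} = e_r e_s^T and let L(A,E_{rs}) be the Fréchet derivative of the matrix exponential at A in direction E_{rs}. Then the total network sensitivity S_{rs} = 1^T L(A,E_{rs}) 1 is maximized over all pairs (r,s) at (r,s) = (n,1). -/

import Mathlib

/-- The n×n adjacency matrix of the directed path: ones on the superdiagonal. -/
def pathAdj (n : ℕ) : Matrix (Fin n) (Fin n) ℝ :=
  Matrix.of fun i j => if (i : ℕ) + 1 = (j : ℕ) then 1 else 0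

/-- `H_{rs}^{(k)} = Σ_{p+q=k} A^p (e_r e_sᵀ) A^q`. -/
def Hmat (n : ℕ) (r s : Fin n) (k : ℕ) : Matrix (Fin n) (Fin n) ℝ :=
  ∑ p ∈ Finset.range (k + 1),
    (pathAdj n) ^ p * Matrix.single r s (1 : ℝ) * (pathAdj n) ^ (k - p)

/-- `1ᵀ M 1`, the sum of all entries of a matrix. -/
def totSum {n : ℕ} (M : Matrix (Fin n) (Fin n) ℝ) : ℝ := ∑ i, ∑ j, M i j

/-- The Fréchet derivative of the matrix exponential at `A` in direction `E_{rs}`: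
`L(A, E_{rs}) = Σ_{k≥1} (1/k!) Σ_{p+q=k-1} A^p E_{rs} A^q`. -/
noncomputable def frechetExp (n : ℕ) (r s : Fin n) : Matrix (Fin n) (Fin n) ℝ :=
  ∑' k : ℕ, ((Nat.factorial (k + 1) : ℝ))⁻¹ • Hmat n r s k

/-- The total network sensitivity `S_{rs} = 1ᵀ L(A, E_{rs}) 1`. -/
noncomputable def sens (n : ℕ) (r s : Fin n) : ℝ := totSum (frechetExp n r s)

lemma pathAdj_pow (n p : ℕ) (i j : Fin n) :
    ((pathAdj n) ^ p) i j = if (i : ℕ) + p = (j : ℕ) then 1 else 0 := by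
  induction p generalizing j with
  | zero => simp [Matrix.one_apply, Fin.ext_iff]
  | succ p ih =>
      rw [pow_succ, Matrix.mul_apply]
      simp only [ih]
      simp only [pathAdj, Matrix.of_apply, ite_mul, one_mul, zero_mul]
      by_cases h : (i : ℕ) + p + 1 = (j : ℕ)
      · have hx : (i : ℕ) + p < n := by omega
        rw [Finset.sum_eq_single (⟨(i:ℕ)+p, hx⟩ : Fin n)]
        · simp only [Fin.val_mk, if_pos rfl]
          rw [if_pos (show (i:ℕ) + (p+1) = (j:ℕ) by omega), if_pos (show (i:ℕ)+p+1 = (j:ℕ) from h)]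
          simp
        · intro b _ hb
          rw [if_neg]
          intro hc
          exact hb (by simpa [Fin.ext_iff] using hc.symm)
        · simp
      · rw [if_neg (show ¬ (i:ℕ) + (p+1) = (j:ℕ) by omega)]
        apply Finset.sum_eq_zero
        intro x _
        split_ifs with h1 h2
        · omega
        · rfl
        · rfl

lemma Hmat_apply (n : ℕ) (r s : Fin n) (k : ℕ) (i j : Fin n) :
    Hmat n r s k i j = ∑ p ∈ Finset.range (k+1),
      (if (i:ℕ) + p = (r:ℕ) then (1:ℝ) else 0) * (if (s:ℕ) + (k - p) = (j:ℕ) then 1 else 0) := by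
  unfold Hmat
  rw [Matrix.sum_apply]
  apply Finset.sum_congr rfl
  intro p _
  rw [Matrix.mul_apply]
  have : ∀ y : Fin n, ((pathAdj n) ^ p * Matrix.single r s (1:ℝ)) i y
      = (if (i:ℕ) + p = (r:ℕ) then (1:ℝ) else 0) * (if y = s then 1 else 0) := by
    intro y
    by_cases hy : y = s
    · subst hy
      rw [Matrix.mul_single_apply_same, pathAdj_pow]
      simp
    · simp [hy]
  simp only [this]
  rw [Finset.sum_eq_single s]
  · rw [if_pos rfl, mul_one, pathAdj_pow]
  · intro b _ hb
    rw [if_neg hb]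
    ring
  · simp

lemma sum1 (n p : ℕ) (r : Fin n) :
    (∑ i : Fin n, if (i:ℕ) + p = (r:ℕ) then (1:ℝ) else 0) = if p ≤ (r:ℕ) then 1 else 0 := by
  by_cases h : p ≤ (r:ℕ)
  · have hr : (r:ℕ) - p < n := by have := r.isLt; omega
    rw [if_pos h, Finset.sum_eq_single (⟨(r:ℕ)-p, hr⟩ : Fin n)]
    · rw [if_pos (by simp; omega)]
    · intro b _ hb
      rw [if_neg (fun hc => hb (by simp [Fin.ext_iff]; omega))]
    · simp
  · rw [if_neg h]
    exact Finset.sum_eq_zero fun i _ => if_neg (by omega)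

lemma sum2 (n q : ℕ) (s : Fin n) :
    (∑ j : Fin n, if (s:ℕ) + q = (j:ℕ) then (1:ℝ) else 0) = if (s:ℕ) + q < n then 1 else 0 := by
  by_cases h : (s:ℕ) + q < n
  · rw [if_pos h, Finset.sum_eq_single (⟨(s:ℕ)+q, h⟩ : Fin n)]
    · rw [if_pos (by simp)]
    · intro b _ hb
      rw [if_neg (fun hc => hb (by simp [Fin.ext_iff]; omega))]
    · simp
  · rw [if_neg h]
    refine Finset.sum_eq_zero fun j _ => if_neg ?_
    have := j.isLt; omega

lemma totSum_Hmat (n : ℕ) (r s : Fin n) (k : ℕ) :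
    totSum (Hmat n r s k) = ∑ p ∈ Finset.range (k+1),
      (if p ≤ (r:ℕ) then (1:ℝ) else 0) * (if (s:ℕ) + (k - p) < n then 1 else 0) := by
  unfold totSum
  simp only [Hmat_apply]
  have h1 : ∀ i : Fin n, (∑ j : Fin n, ∑ p ∈ Finset.range (k+1),
      (if (i:ℕ) + p = (r:ℕ) then (1:ℝ) else 0) * (if (s:ℕ) + (k - p) = (j:ℕ) then 1 else 0))
      = ∑ p ∈ Finset.range (k+1), ∑ j : Fin n,
      (if (i:ℕ) + p = (r:ℕ) then (1:ℝ) else 0) * (if (s:ℕ) + (k - p) = (j:ℕ) then 1 else 0) :=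
    fun i => Finset.sum_comm
  simp only [h1]
  rw [Finset.sum_comm]
  refine Finset.sum_congr rfl fun p _ => ?_
  rw [← sum1 n p r, ← sum2 n (k-p) s, Finset.sum_mul_sum]

lemma Hmat_nonneg (n : ℕ) (r s : Fin n) (k : ℕ) (i j : Fin n) : 0 ≤ Hmat n r s k i j := by
  rw [Hmat_apply]
  refine Finset.sum_nonneg fun p _ => ?_
  split_ifs <;> norm_num

lemma Hmat_le_one (n : ℕ) (r s : Fin n) (k : ℕ) (i j : Fin n) : Hmat n r s k i j ≤ 1 := by
  rw [Hmat_apply]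
  calc ∑ p ∈ Finset.range (k+1),
      (if (i:ℕ) + p = (r:ℕ) then (1:ℝ) else 0) * (if (s:ℕ) + (k - p) = (j:ℕ) then 1 else 0)
      ≤ ∑ p ∈ Finset.range (k+1), (if (i:ℕ) + p = (r:ℕ) then (1:ℝ) else 0) := by
        refine Finset.sum_le_sum fun p _ => ?_
        split_ifs <;> norm_num
    _ = ((Finset.range (k+1)).filter (fun p => (i:ℕ) + p = (r:ℕ))).card := by
        rw [Finset.sum_boole]
    _ ≤ 1 := by
        have : ((Finset.range (k+1)).filter (fun p => (i:ℕ) + p = (r:ℕ))).card ≤ 1 := by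
          refine Finset.card_le_one.2 fun a ha b hb => ?_
          simp only [Finset.mem_filter] at ha hb
          omega
        exact_mod_cast this

lemma summable_entry (n : ℕ) (r s : Fin n) (i j : Fin n) :
    Summable (fun k : ℕ => ((Nat.factorial (k+1) : ℝ))⁻¹ * Hmat n r s k i j) := by
  have hfac : Summable (fun k : ℕ => ((Nat.factorial (k+1) : ℝ))⁻¹) := by
    have h := Real.summable_pow_div_factorial 1
    simp only [one_pow, one_div] at h
    exact (summable_nat_add_iff 1).2 h
  refine Summable.of_nonneg_of_le (fun k => ?_) (fun k => ?_) hfac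
  · exact mul_nonneg (by positivity) (Hmat_nonneg n r s k i j)
  · calc ((Nat.factorial (k+1) : ℝ))⁻¹ * Hmat n r s k i j
        ≤ ((Nat.factorial (k+1) : ℝ))⁻¹ * 1 :=
          mul_le_mul_of_nonneg_left (Hmat_le_one n r s k i j) (by positivity)
      _ = _ := mul_one _

lemma sens_eq (n : ℕ) (r s : Fin n) :
    sens n r s = ∑' k : ℕ, ((Nat.factorial (k+1) : ℝ))⁻¹ * totSum (Hmat n r s k) := by
  have hsm : Summable (fun k : ℕ => ((Nat.factorial (k+1) : ℝ))⁻¹ • Hmat n r s k) := by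
    refine Pi.summable.2 fun i => Pi.summable.2 fun j => ?_
    exact summable_entry n r s i j
  have happly : ∀ i j : Fin n, frechetExp n r s i j
      = ∑' k : ℕ, ((Nat.factorial (k+1) : ℝ))⁻¹ * Hmat n r s k i j := by
    intro i j
    unfold frechetExp
    erw [tsum_apply hsm, tsum_apply (Pi.summable.1 hsm i)]
    rfl
  unfold sens totSum
  simp only [happly]
  have e1 : ∀ i : Fin n, (∑ j : Fin n, ∑' k : ℕ, ((Nat.factorial (k+1) : ℝ))⁻¹ * Hmat n r s k i j)
      = ∑' k : ℕ, ∑ j : Fin n, ((Nat.factorial (k+1) : ℝ))⁻¹ * Hmat n r s k i j :=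
    fun i => (Summable.tsum_finsetSum (fun j _ => summable_entry n r s i j)).symm
  simp only [e1]
  rw [← Summable.tsum_finsetSum (fun i _ => summable_sum (fun j _ => summable_entry n r s i j))]
  exact tsum_congr fun k => by simp [Finset.mul_sum]

lemma summable_sens (n : ℕ) (r s : Fin n) :
    Summable (fun k : ℕ => ((Nat.factorial (k+1) : ℝ))⁻¹ * totSum (Hmat n r s k)) := by
  have : (fun k : ℕ => ((Nat.factorial (k+1) : ℝ))⁻¹ * totSum (Hmat n r s k))
      = fun k => ∑ i : Fin n, ∑ j : Fin n, ((Nat.factorial (k+1) : ℝ))⁻¹ * Hmat n r s k i j :=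
    funext fun k => by simp [totSum, Finset.mul_sum]
  rw [this]
  exact summable_sum fun i _ => summable_sum fun j _ => summable_entry n r s i j

lemma totSum_le (n : ℕ) (hn : 0 < n) (r s : Fin n) (k : ℕ) :
    totSum (Hmat n r s k) ≤ totSum (Hmat n (⟨n - 1, Nat.sub_lt hn Nat.one_pos⟩ : Fin n) (⟨0, hn⟩ : Fin n) k) := by
  rw [totSum_Hmat, totSum_Hmat]
  refine Finset.sum_le_sum fun p _ => ?_
  have hr := r.isLt
  have hs := s.isLt
  simp only [Fin.val_mk]
  split_ifs <;> simp_all <;> omega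

/-- the total network sensitivity `S_{rs}` for the directed path graph is
maximized over all pairs `(r,s)` at `(r,s) = (n,1)` (i.e. `(n-1, 0)` in 0-based indexing). -/
theorem sens_max (n : ℕ) (hn : 0 < n) (r s : Fin n) :
    sens n r s ≤ sens n (⟨n - 1, by omega⟩ : Fin n) (⟨0, hn⟩ : Fin n) := by
  rw [sens_eq, sens_eq]
  refine Summable.tsum_le_tsum (fun k => ?_) (summable_sens n r s) (summable_sens n _ _)
  exact mul_le_mul_of_nonneg_left (totSum_le n hn r s k) (by positivity)
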